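/- The single-session all-honest-committee probability p_h(n, t) = ((n − t)/n) · ∏_{i=1}^{t} (n − i − t)/(n − i) is nonincreasing in t for fixed n, for 0 ≤ t with n ≥ 3t + 1. -/

import Mathlib

/-- The single-session all-honest-committee probability. -/
noncomputable def ph (n t : ℕ) : ℝ :=
  (((n : ℝ) - t) / n) * ∏ i ∈ Finset.Icc 1 t, ((n : ℝ) - i - t) / ((n : ℝ) - i)

lemma ph_eq (n t : ℕ) :
    ph n t = ∏ i ∈ Finset.range (t + 1), ((n : ℝ) - i - t) / ((n : ℝ) - i) := by
  rw [ph, Finset.prod_range_succ', show Finset.Icc 1 t = Finset.Ico 1 (t+1) by rfl,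
    Finset.prod_Ico_eq_prod_range]
  simp only [Nat.add_sub_cancel, add_comm 1]
  push_cast
  ring

lemma ph_nonneg (n t : ℕ) (hn : n ≥ 2 * t) : 0 ≤ ph n t := by
  rw [ph_eq]
  apply Finset.prod_nonneg
  intro i hi
  simp only [Finset.mem_range, Nat.lt_succ_iff] at hi
  have h1 : (i : ℝ) ≤ t := by exact_mod_cast hi
  have h2 : (2 : ℝ) * t ≤ n := by exact_mod_cast hn
  apply div_nonneg <;> linarith

lemma ph_step (n t : ℕ) (hn : n ≥ 3 * (t + 1) + 1) : ph n (t + 1) ≤ ph n t := by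
  have ht : (3 : ℝ) * (t + 1) + 1 ≤ n := by exact_mod_cast hn
  rw [ph_eq, ph_eq]
  have key : ∏ i ∈ Finset.range (t + 2), ((n : ℝ) - i - (t+1)) / ((n : ℝ) - i)
      ≤ ∏ i ∈ Finset.range (t + 2), ((n : ℝ) - i - t) / ((n : ℝ) - i) := by
    apply Finset.prod_le_prod
    · intro i hi
      simp only [Finset.mem_range, Nat.lt_succ_iff] at hi
      have h1 : (i : ℝ) ≤ t + 1 := by exact_mod_cast hi
      apply div_nonneg <;> linarith
    · intro i hi
      simp only [Finset.mem_range, Nat.lt_succ_iff] at hi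
      have h1 : (i : ℝ) ≤ t + 1 := by exact_mod_cast hi
      exact div_le_div_of_nonneg_right (by linarith) (by linarith)
  have hsplit : ∏ i ∈ Finset.range (t + 2), ((n : ℝ) - i - t) / ((n : ℝ) - i)
      = (∏ i ∈ Finset.range (t + 1), ((n : ℝ) - i - t) / ((n : ℝ) - i))
        * (((n : ℝ) - (t+1) - t) / ((n : ℝ) - (t+1))) := by
    rw [Finset.prod_range_succ]; push_cast; ring
  have hlast : ((n : ℝ) - (t+1) - t) / ((n : ℝ) - (t+1)) ≤ 1 := by
    rw [div_le_one (by linarith)]; linarith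
  have hnn : 0 ≤ ∏ i ∈ Finset.range (t + 1), ((n : ℝ) - i - t) / ((n : ℝ) - i) := by
    have := ph_nonneg n t (by omega)
    rwa [ph_eq] at this
  push_cast
  calc ∏ i ∈ Finset.range (t + 1 + 1), ((n : ℝ) - i - ((t:ℝ)+1)) / ((n : ℝ) - i)
      ≤ ∏ i ∈ Finset.range (t + 2), ((n : ℝ) - i - t) / ((n : ℝ) - i) := by
        exact key
    _ = _ * _ := hsplit
    _ ≤ (∏ i ∈ Finset.range (t + 1), ((n : ℝ) - i - t) / ((n : ℝ) - i)) * 1 := by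
        gcongr
    _ = _ := mul_one _

/-- For fixed `n`, the probability `p_h(n, t)` is nonincreasing in `t`
over the range where `n ≥ 3t + 1`. -/
theorem ph_antitone_in_t (n t₁ t₂ : ℕ) (h12 : t₁ ≤ t₂) (hn : n ≥ 3 * t₂ + 1) :
    ph n t₂ ≤ ph n t₁ := by
  induction t₂, h12 using Nat.le_induction with
  | base => exact le_refl _
  | succ k hk ih =>
    exact le_trans (ph_step n k hn) (ih (by omega))
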